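/- Let S be a numerical set with S ≠ ℕ such that its complement S̃ is a numerical semigroup. Then A(S) has at most one small atom. Moreover, if S is not itself a numerical semigroup, then A(S) ∩ [1, B(S) − 1] = ∅; in particular A(S) is either {0} ∪ [F(S)+1, ∞) or {0, B(S)} ∪ [F(S)+1, ∞). -/
import Mathlib


open Set

def IsNumericalSet (S : Set ℕ) : Prop := 0 ∈ S ∧ Sᶜ.Finite

def IsNumericalSemigroup (S : Set ℕ) : Prop :=
  IsNumericalSet S ∧ ∀ a ∈ S, ∀ b ∈ S, a + b ∈ S

/-- The associated set `A(S) = {s ∈ S : s + S ⊆ S}`. -/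
def A (S : Set ℕ) : Set ℕ := {s ∈ S | ∀ t ∈ S, s + t ∈ S}

/-- The Frobenius number: the largest gap of `S`. -/
noncomputable def F (S : Set ℕ) : ℕ := sSup Sᶜ

/-- The base: the largest element of `S` below `F S`. -/
noncomputable def B (S : Set ℕ) : ℕ := sSup {s | s ∈ S ∧ s < F S}

/-- The multiplicity: the smallest positive element of `S`. -/
noncomputable def m (S : Set ℕ) : ℕ := sInf {s | s ∈ S ∧ 0 < s}

/-- The complement numerical set (for `S ≠ ℕ`). -/
noncomputable def Stilde (S : Set ℕ) : Set ℕ :=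
  {x | ∃ s ∈ S, s ≤ B S ∧ x = B S - s} ∪ {n | B S ≤ n}

-- The complement operation, with the convention that the complement of ℕ is ℕ.
open Classical in
noncomputable def complOp (S : Set ℕ) : Set ℕ :=
  if S = Set.univ then Set.univ else Stilde S

/-- The genus: the number of gaps. -/
noncomputable def genus (S : Set ℕ) : ℕ := Sᶜ.ncard

/-- The number of boxes with hook length 1. -/
noncomputable def c1 (S : Set ℕ) : ℕ := {n | n ∈ S ∧ n + 1 ∉ S}.ncard

/-- An atom: a positive element not a sum of two positive elements. -/
def IsAtomOf (S : Set ℕ) (a : ℕ) : Prop :=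
  a ∈ S ∧ 0 < a ∧ ¬ ∃ x ∈ S, ∃ y ∈ S, 0 < x ∧ 0 < y ∧ a = x + y

/-- A small atom: an atom smaller than the Frobenius number. -/
def IsSmallAtom (S : Set ℕ) (a : ℕ) : Prop := IsAtomOf S a ∧ a < F S

/-- The embedding dimension: the number of atoms. -/
noncomputable def numAtoms (S : Set ℕ) : ℕ := {a | IsAtomOf S a}.ncard

/-- Maximal embedding dimension. -/
def MaxED (S : Set ℕ) : Prop := numAtoms S = m S


theorem associated_when_complement_semigroup (S : Set ℕ) (hS : IsNumericalSet S)
    (hne : S ≠ Set.univ) (hT : IsNumericalSemigroup (Stilde S)) :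
    {a | IsSmallAtom (A S) a}.ncard ≤ 1 ∧
      (¬ IsNumericalSemigroup S →
        A S ∩ Set.Icc 1 (B S - 1) = ∅ ∧
          (A S = {0} ∪ {n | F S + 1 ≤ n} ∨ A S = {0, B S} ∪ {n | F S + 1 ≤ n})) := by
  have hFmem : F S ∈ Sᶜ := Nat.sSup_mem (Set.nonempty_compl.2 hne) hS.2.bddAbove
  have hFS : F S ∉ S := hFmem
  have hgap : ∀ x, x ∉ S → x ≤ F S := fun x hx => le_csSup hS.2.bddAbove hx
  have hgt : ∀ n, F S < n → n ∈ S := by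
    intro n hn; by_contra h; exact absurd (hgap n h) (by omega)
  have hFpos : 0 < F S := by
    rcases Nat.eq_zero_or_pos (F S) with h | h
    · exact absurd (h ▸ hS.1) hFS
    · exact h
  have hBmem : B S ∈ S ∧ B S < F S :=
    Nat.sSup_mem (s := {s | s ∈ S ∧ s < F S}) ⟨0, hS.1, hFpos⟩ ⟨F S, fun x hx => hx.2.le⟩
  have hBS : B S ∈ S := hBmem.1
  have hBF : B S < F S := hBmem.2
  have hle : ∀ s ∈ S, s < F S → s ≤ B S := fun s hs hsF =>
    le_csSup ⟨F S, fun x hx => hx.2.le⟩ ⟨hs, hsF⟩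
  have hup : ∀ s ∈ S, B S < s → F S < s := by
    intro s hs hBs
    by_contra h
    rcases Nat.lt_or_ge s (F S) with h1 | h1
    · exact absurd (hle s hs h1) (by omega)
    · have : s = F S := by omega
      exact hFS (this ▸ hs)
  have hmirST : ∀ s ∈ S, s ≤ B S → B S - s ∈ Stilde S := by
    intro s hs hsB; exact Or.inl ⟨s, hs, hsB, rfl⟩
  have hmirTS : ∀ x ∈ Stilde S, x < B S → B S - x ∈ S := by
    intro x hx hxB
    rcases hx with ⟨u, huS, huB, heq⟩ | h
    · have : B S - x = u := by omega
      rw [this]; exact huS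
    · exact absurd h (by simp only [Set.mem_setOf_eq]; omega)
  have hfold : ∀ s ∈ S, ∀ t ∈ S, s ≤ B S → t ≤ B S → B S ≤ s + t → s + t - B S ∈ S := by
    intro s hs t ht hsB htB hsum
    have hxy := hT.2 _ (hmirST s hs hsB) _ (hmirST t ht htB)
    rcases hxy with ⟨u, huS, huB, heq⟩ | h
    · have : s + t - B S = u := by omega
      rw [this]; exact huS
    · simp only [Set.mem_setOf_eq] at h
      have : s + t - B S = 0 := by omega
      rw [this]; exact hS.1
  have hTmul : ∀ x ∈ Stilde S, ∀ j : ℕ, j * x ∈ Stilde S := by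
    intro x hx j
    induction j with
    | zero => simpa using hmirST (B S) hBS le_rfl
    | succ j ih =>
      have := hT.2 _ ih _ hx
      have heq : (j + 1) * x = j * x + x := by ring
      rw [heq]; exact this
  have hA0 : 0 ∈ A S := ⟨hS.1, fun t ht => by simpa using ht⟩
  have hAbig : ∀ n, F S < n → n ∈ A S := fun n hn =>
    ⟨hgt n hn, fun t ht => hgt _ (by omega)⟩
  have hAsub : ∀ x ∈ A S, x ∈ S := fun x hx => hx.1
  -- THE MAIN LEMMA
  have main : ∀ a, a ∈ A S → 0 < a → a < B S →
      ∃ g, 0 < g ∧ g ∈ A S ∧ F S < B S + g ∧ (∀ s ∈ S, s ≤ F S → g ∣ s) ∧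
        (∀ w, w ≤ B S → g ∣ w → w ∈ S) := by
    intro a
    induction a using Nat.strong_induction_on with
    | _ a IH =>
    intro haA hapos haB
    obtain ⟨haS, hAadd⟩ := haA
    have addmul : ∀ t ∈ S, ∀ j : ℕ, t + j * a ∈ S := by
      intro t ht j
      induction j with
      | zero => simpa using ht
      | succ j ih =>
        have := hAadd _ ih
        have heq : t + (j + 1) * a = a + (t + j * a) := by ring
        rw [heq]; exact this
    by_cases hex : ∃ s ∈ S, s ≤ B S ∧ (B S - s) % a ≠ 0
    · -- inductive case: minimal nonzero residue
      set V : Set ℕ := {x | x ≠ 0 ∧ ∃ s ∈ S, s ≤ B S ∧ (B S - s) % a = x} with hV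
      have hVne : V.Nonempty := by
        obtain ⟨s, hs, hsB, hsr⟩ := hex
        exact ⟨(B S - s) % a, hsr, s, hs, hsB, rfl⟩
      set ρ := sInf V with hρdef
      have hρmem := Nat.sInf_mem hVne
      obtain ⟨hρ0, s₀, hs₀S, hs₀B, hs₀eq⟩ := hρmem
      have hmin : ∀ x ∈ V, ρ ≤ x := fun x hx => Nat.sInf_le hx
      have hρpos : 0 < ρ := Nat.pos_of_ne_zero hρ0
      have hρa : ρ < a := by
        rw [hρdef, ← hs₀eq]; exact Nat.mod_lt _ hapos
      have hρB : ρ ≤ B S := by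
        have := Nat.mod_le (B S - s₀) a
        omega
      have hBρS : B S - ρ ∈ S := by
        have hq := Nat.div_add_mod (B S - s₀) a
        have hm := addmul s₀ hs₀S ((B S - s₀) / a)
        have hc : (B S - s₀) / a * a = a * ((B S - s₀) / a) := Nat.mul_comm _ _
        have heq : s₀ + (B S - s₀) / a * a = B S - ρ := by omega
        rwa [heq] at hm
      have hρae : ρ + F S < a + B S := by
        have h1 : a + (B S - ρ) ∈ S := hAadd _ hBρS
        have h2 := hup _ h1 (by omega)
        omega
      have hFBρ : F S < B S + ρ := by
        by_contra hcon
        push_neg at hcon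
        have hPex : ∃ j, a + B S ≤ j * ρ + F S := by
          refine ⟨a, ?_⟩
          have : a * 1 ≤ a * ρ := Nat.mul_le_mul_left a hρpos
          have hc : a * ρ = ρ * a := Nat.mul_comm _ _
          omega
        set j₀ := Nat.find hPex with hj₀def
        have hPj₀ : a + B S ≤ j₀ * ρ + F S := Nat.find_spec hPex
        have hj₀pos : j₀ ≠ 0 := by
          intro h
          rw [h] at hPj₀
          simp at hPj₀
          omega
        obtain ⟨j', hj'⟩ : ∃ j', j₀ = j' + 1 := ⟨j₀ - 1, by omega⟩
        rw [hj'] at hPj₀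
        have hnP : ¬ (a + B S ≤ j' * ρ + F S) := Nat.find_min hPex (by omega)
        push_neg at hnP
        have hprod : (j' + 1) * ρ = j' * ρ + ρ := by ring
        have hja : (j' + 1) * ρ < a := by omega
        have hρT : ρ ∈ Stilde S := by
          have h1 := hmirST _ hBρS (by omega)
          have heq : B S - (B S - ρ) = ρ := by omega
          rwa [heq] at h1
        have hjT := hTmul _ hρT (j' + 1)
        have hBj := hmirTS _ hjT (by omega)
        have h1 := hAadd _ hBj
        have h2 := hup _ h1 (by omega)
        omega
      have hρBa : ρ + a ≤ B S := by
        by_cases hr : B S % a = 0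
        · obtain ⟨c, hc⟩ := Nat.dvd_of_mod_eq_zero hr
          have hc2 : 2 ≤ c := by
            rcases Nat.lt_or_ge c 2 with h | h
            · interval_cases c <;> omega
            · exact h
          have : a * 2 ≤ a * c := Nat.mul_le_mul_left a hc2
          omega
        · have hrV : B S % a ∈ V := ⟨hr, 0, hS.1, Nat.zero_le _, by simp⟩
          have hρr := hmin _ hrV
          have hdiv := Nat.div_add_mod (B S) a
          have h1 : 1 ≤ B S / a := (Nat.one_le_div_iff hapos).2 (le_of_lt haB)
          have : a * 1 ≤ a * (B S / a) := Nat.mul_le_mul_left a h1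
          omega
      have hsubρ : ∀ x ∈ S, ρ ≤ x → x ≤ B S → x - ρ ∈ S := by
        intro x hx hρx hxB
        have := hfold x hx _ hBρS hxB (by omega) (by omega)
        have heq : x + (B S - ρ) - B S = x - ρ := by omega
        rwa [heq] at this
      have clgen : ∀ n j l t w, t ∈ S → t ≤ B S → j + l ≤ n →
          t + j * a = w + l * ρ → w ≤ B S → w ∈ S := by
        intro n
        induction n with
        | zero =>
          intro j l t w ht htB hn heq hwB
          have hj : j = 0 := by omega
          have hl : l = 0 := by omega
          subst hj; subst hl
          simp at heq
          rwa [← heq]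
        | succ n IHn =>
          intro j l t w ht htB hn heq hwB
          rcases Nat.eq_zero_or_pos l with hl | hl
          · subst hl
            simp at heq
            rw [← heq]
            exact addmul t ht j
          · obtain ⟨l', rfl⟩ : ∃ l', l = l' + 1 := ⟨l - 1, by omega⟩
            have hprodl : (l' + 1) * ρ = l' * ρ + ρ := by ring
            by_cases hwρ : w + ρ ≤ B S
            · have hw' := IHn j l' t (w + ρ) ht htB (by omega) (by omega) hwρ
              have := hsubρ _ hw' (by omega) hwρ
              have heq2 : w + ρ - ρ = w := by omega
              rwa [heq2] at this
            · push_neg at hwρ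
              rcases Nat.eq_zero_or_pos j with hj | hj
              · subst hj
                simp at heq
                omega
              · obtain ⟨j', rfl⟩ : ∃ j', j = j' + 1 := ⟨j - 1, by omega⟩
                have hprodj : (j' + 1) * a = j' * a + a := by ring
                have hwa : a ≤ w := by omega
                have hstep := IHn j' (l' + 1) t (w - a) ht htB (by omega) (by omega)
                  (by omega)
                have h2 := hAadd _ hstep
                have heq2 : a + (w - a) = w := by omega
                rwa [heq2] at h2
      have hAdd : ∀ t ∈ S, ρ + t ≤ B S → ρ + t ∈ S := by
        intro t ht htρ
        set c := Nat.gcd a ρ with hc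
        obtain ⟨u, hu⟩ : c ∣ ρ := Nat.gcd_dvd_right a ρ
        obtain ⟨v, hv⟩ : c ∣ a := Nat.gcd_dvd_left a ρ
        obtain ⟨v', rfl⟩ : ∃ v', v = v' + 1 := by
          refine ⟨v - 1, ?_⟩
          rcases Nat.eq_zero_or_pos v with h | h
          · subst h; simp at hv; omega
          · omega
        have key : u * a = (v' + 1) * ρ := by rw [hv, hu]; ring
        have hpv : (v' + 1) * ρ = v' * ρ + ρ := by ring
        have htB : t ≤ B S := by omega
        exact clgen (u + v') u v' t (ρ + t) ht htB le_rfl (by omega) htρ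
      have hρS : ρ ∈ S := by
        have := hAdd 0 hS.1 (by omega)
        simpa using this
      have hρA : ρ ∈ A S := by
        refine ⟨hρS, fun t ht => ?_⟩
        rcases Nat.lt_or_ge (B S) t with h | h
        · exact hgt _ (by have := hup t ht h; omega)
        · by_cases h2 : ρ + t ≤ B S
          · exact hAdd t ht h2
          · push_neg at h2
            by_cases h3 : t = B S
            · exact hgt _ (by omega)
            · exfalso
              have hmem : B S - t ∈ V := by
                refine ⟨by omega, t, ht, by omega, ?_⟩
                exact Nat.mod_eq_of_lt (by omega)
              have := hmin _ hmem
              omega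
      exact IH ρ (by omega) hρA (by omega) (by omega)
    · -- base case: every residue is zero
      push_neg at hex
      refine ⟨a, hapos, ⟨haS, hAadd⟩, ?_, ?_, ?_⟩
      · have h1 : a + B S ∈ S := hAadd _ hBS
        have := hup _ h1 (by omega)
        omega
      · intro s hs hsF
        have hsB : s ≤ B S := by
          rcases Nat.lt_or_ge s (F S) with h | h
          · exact hle s hs h
          · have heqs : s = F S := by omega
            exact absurd (heqs ▸ hs) hFS
        have hdB : a ∣ B S := by
          have := hex 0 hS.1 (Nat.zero_le _)
          simp at this
          exact Nat.dvd_of_mod_eq_zero this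
        have hdBs : a ∣ B S - s := Nat.dvd_of_mod_eq_zero (hex s hs hsB)
        have heq : s = B S - (B S - s) := by omega
        rw [heq]
        exact Nat.dvd_sub hdB hdBs
      · intro w hwB hdw
        obtain ⟨c, rfl⟩ := hdw
        have := addmul 0 hS.1 c
        have heq : 0 + c * a = a * c := by ring
        rwa [heq] at this
  -- F (A S) = F S
  have hAc : (A S)ᶜ ⊆ Set.Iic (F S) := by
    intro x hx
    simp only [Set.mem_compl_iff] at hx
    by_contra h
    exact hx (hAbig x (by simpa using h))
  have hFA : F (A S) = F S := by
    have hFnA : F S ∉ A S := fun h => hFS (hAsub _ h)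
    apply le_antisymm
    · exact csSup_le ⟨F S, hFnA⟩ (fun x hx => hAc hx)
    · exact le_csSup ⟨F S, fun x hx => hAc hx⟩ hFnA
  have hsingle : ∀ c : ℕ, {a | IsSmallAtom (A S) a} ⊆ {c} →
      {a | IsSmallAtom (A S) a}.ncard ≤ 1 := by
    intro c h
    rcases Set.subset_singleton_iff_eq.mp h with h1 | h1 <;> simp [h1]
  by_cases hcase : ∃ a ∈ A S, 0 < a ∧ a < B S
  · -- S is a semigroup; structure via main
    obtain ⟨a, haA, hapos, haB⟩ := hcase
    obtain ⟨g, hgpos, hgA, hFBg, hdvd, hmulS⟩ := main a haA hapos haB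
    have hgB : g ∣ B S := hdvd _ hBS (le_of_lt hBF)
    have hbig : ∀ x, B S < x → g ∣ x → F S < x := by
      intro x hx hdx
      have h1 : g ∣ x - B S := Nat.dvd_sub hdx hgB
      have h2 : g ≤ x - B S := Nat.le_of_dvd (by omega) h1
      omega
    have hgAmul : ∀ w, w ≤ B S → g ∣ w → w ∈ A S := by
      intro w hwB hdw
      refine ⟨hmulS w hwB hdw, fun t ht => ?_⟩
      rcases Nat.lt_or_ge (F S) t with h | h
      · exact hgt _ (by omega)
      · have hdt : g ∣ t := hdvd t ht h
        have htB : t ≤ B S := by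
          rcases Nat.lt_or_ge t (F S) with h1 | h1
          · exact hle t ht h1
          · have heqt : t = F S := by omega
            exact absurd (heqt ▸ ht) hFS
        have hdwt : g ∣ w + t := Nat.dvd_add hdw hdt
        rcases Nat.lt_or_ge (B S) (w + t) with h2 | h2
        · exact hgt _ (hbig _ h2 hdwt)
        · exact hmulS _ h2 hdwt
    have hsg : IsNumericalSemigroup S := by
      refine ⟨hS, fun x hx y hy => ?_⟩
      rcases Nat.lt_or_ge (F S) x with h1 | h1
      · exact hgt _ (by omega)
      rcases Nat.lt_or_ge (F S) y with h2 | h2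
      · exact hgt _ (by omega)
      have hdx : g ∣ x := hdvd x hx h1
      have hdy : g ∣ y := hdvd y hy h2
      have hdxy : g ∣ x + y := Nat.dvd_add hdx hdy
      rcases Nat.lt_or_ge (B S) (x + y) with h3 | h3
      · exact hgt _ (hbig _ h3 hdxy)
      · exact hmulS _ h3 hdxy
    constructor
    · apply hsingle g
      intro x hx
      obtain ⟨⟨hxA, hxpos, hxnot⟩, hxF⟩ := hx
      rw [hFA] at hxF
      have hxS : x ∈ S := hAsub _ hxA
      have hdx : g ∣ x := hdvd x hxS (le_of_lt hxF)
      have hxB : x ≤ B S := hle x hxS hxF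
      have hgx : g ≤ x := Nat.le_of_dvd hxpos hdx
      rcases Nat.eq_or_lt_of_le hgx with h | h
      · simp [← h]
      · exfalso
        apply hxnot
        refine ⟨g, hgA, x - g, hgAmul _ (by omega) (Nat.dvd_sub hdx dvd_rfl),
          hgpos, by omega, by omega⟩
    · intro hnsg
      exact absurd hsg hnsg
  · -- no small-middle element of A S
    push_neg at hcase
    constructor
    · apply hsingle (B S)
      intro x hx
      obtain ⟨⟨hxA, hxpos, hxnot⟩, hxF⟩ := hx
      rw [hFA] at hxF
      have hxS : x ∈ S := hAsub _ hxA
      have hxB : x ≤ B S := hle x hxS hxF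
      have := hcase x hxA hxpos
      have : x = B S := by omega
      simp [this]
    · intro hnsg
      constructor
      · ext x
        simp only [Set.mem_inter_iff, Set.mem_Icc, Set.mem_empty_iff_false, iff_false]
        rintro ⟨hxA, hx1, hx2⟩
        have := hcase x hxA (by omega)
        omega
      · have hmemA : ∀ x ∈ A S, x = 0 ∨ x = B S ∨ F S + 1 ≤ x := by
          intro x hxA
          rcases Nat.eq_zero_or_pos x with h | h
          · exact Or.inl h
          rcases Nat.lt_or_ge (F S) x with h1 | h1
          · exact Or.inr (Or.inr (by omega))
          have hxS : x ∈ S := hAsub _ hxA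
          have hxF : x < F S := by
            rcases Nat.eq_or_lt_of_le h1 with h2 | h2
            · exact absurd hxS (by rw [h2]; exact hFS)
            · exact h2
          have hxB : x ≤ B S := hle x hxS hxF
          have := hcase x hxA h
          exact Or.inr (Or.inl (by omega))
        by_cases hBA : B S ∈ A S
        · right
          ext x
          simp only [Set.mem_union, Set.mem_insert_iff, Set.mem_singleton_iff,
            Set.mem_setOf_eq]
          constructor
          · intro hx
            rcases hmemA x hx with h | h | h
            · exact Or.inl (Or.inl h)
            · exact Or.inl (Or.inr h)
            · exact Or.inr h
          · rintro (h | h)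
            · rcases h with h | h
              · rw [h]; exact hA0
              · rw [h]; exact hBA
            · exact hAbig x (by omega)
        · left
          ext x
          simp only [Set.mem_union, Set.mem_singleton_iff, Set.mem_setOf_eq]
          constructor
          · intro hx
            rcases hmemA x hx with h | h | h
            · exact Or.inl h
            · exact absurd (h ▸ hx) hBA
            · exact Or.inr h
          · rintro (h | h)
            · rw [h]; exact hA0
            · exact hAbig x (by omega)
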